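/- For every even integer N ≥ 2, S(N) = 3 · ∏_{p prime, p ∤ N, p < N} (1 + 1/p²) · ∏_{p prime, p ∣ N} (1 − 2/(p² + 1)) satisfies S(N) > 1. -/

import Mathlib

open Finset

/-- The singular series
`S(N) = 3 · ∏_{p prime, p ∤ N, p < N} (1 + 1/p²) · ∏_{p prime, p ∣ N} (1 − 2/(p² + 1))`. -/
noncomputable def singularSeries (N : ℕ) : ℝ :=
  3 * (∏ p ∈ (Finset.range N).filter (fun p => p.Prime ∧ ¬ p ∣ N), (1 + 1 / (p : ℝ) ^ 2))
    * (∏ p ∈ N.primeFactors, (1 - 2 / ((p : ℝ) ^ 2 + 1)))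

/-- Weierstrass product inequality. -/
lemma weier_aux (s : Finset ℕ) (f : ℕ → ℝ) (h0 : ∀ i ∈ s, 0 ≤ f i) (h1 : ∀ i ∈ s, f i ≤ 1) :
    1 - ∑ i ∈ s, f i ≤ ∏ i ∈ s, (1 - f i) := by
  induction s using Finset.cons_induction with
  | empty => simp
  | cons a s ha ih =>
    rw [Finset.prod_cons, Finset.sum_cons]
    have h0a : 0 ≤ f a := h0 a (Finset.mem_cons_self _ _)
    have h1a : f a ≤ 1 := h1 a (Finset.mem_cons_self _ _)
    have ih' := ih (fun i hi => h0 i (Finset.mem_cons_of_mem hi))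
      (fun i hi => h1 i (Finset.mem_cons_of_mem hi))
    have hS : 0 ≤ ∑ i ∈ s, f i :=
      Finset.sum_nonneg fun i hi => h0 i (Finset.mem_cons_of_mem hi)
    nlinarith [mul_le_mul_of_nonneg_left ih' (by linarith : (0:ℝ) ≤ 1 - f a)]

/-- Telescoping sum bound. -/
lemma tele_aux : ∀ n : ℕ, 1 ≤ n →
    ∑ m ∈ Finset.Icc 2 n, (1 : ℝ) / (m * (m + 1)) ≤ 1/2 - 1/(n+1) := by
  intro n hn
  induction n with
  | zero => omega
  | succ n ih =>
    rcases Nat.lt_or_ge n 1 with h | h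
    · interval_cases n
      · norm_num
    · rw [← Finset.insert_Icc_right_eq_Icc_add_one (by omega), Finset.sum_insert (by simp)]
      have := ih h
      have hn0 : (0:ℝ) < (n:ℝ) + 1 := by positivity
      have hn2 : (0:ℝ) < (n:ℝ) + 2 := by positivity
      have key : (1 : ℝ) / ((n+1) * ((n+1) + 1)) = 1/(n+1) - 1/(n+2) := by
        field_simp; ring
      push_cast
      push_cast at this key
      rw [key, show ((n:ℝ)+1+1) = (n:ℝ)+2 from by ring]
      linarith

lemma tele_aux' (n : ℕ) : ∑ m ∈ Finset.Icc 2 n, (1 : ℝ) / (m * (m + 1)) ≤ 1/2 := by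
  rcases Nat.lt_or_ge n 1 with h | h
  · interval_cases n; norm_num
  · have := tele_aux n h
    have : (0:ℝ) < (n:ℝ) + 1 := by positivity
    have := tele_aux n h
    have hpos : (0:ℝ) ≤ 1/((n:ℝ)+1) := by positivity
    linarith

noncomputable def gfun (m : ℕ) : ℝ := 1/2 * (1 / ((m : ℝ) * ((m : ℝ) + 1)))

/-- sum of 2/(p²+1) over a finite set of odd naturals ≥ 5 is at most 1/4 -/
lemma sum_odd_aux (F : Finset ℕ) (hodd : ∀ p ∈ F, p % 2 = 1) (h5 : ∀ p ∈ F, 5 ≤ p) :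
    ∑ p ∈ F, 2 / ((p : ℝ) ^ 2 + 1) ≤ 1/4 := by
  have step1 : ∑ p ∈ F, 2 / ((p : ℝ) ^ 2 + 1) ≤ ∑ p ∈ F, gfun (p / 2) := by
    apply Finset.sum_le_sum
    intro p hp
    have hmod := hodd p hp
    have h5p := h5 p hp
    have hpe : p = 2 * (p / 2) + 1 := by omega
    set m := p / 2 with hm
    have hm2 : 2 ≤ m := by omega
    have hmr : (2:ℝ) ≤ (m:ℝ) := by exact_mod_cast hm2
    have hpr : (p:ℝ) = 2 * (m:ℝ) + 1 := by exact_mod_cast hpe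
    rw [hpr, gfun]
    have hden1 : (0:ℝ) < (2*(m:ℝ)+1)^2 + 1 := by positivity
    have hden2 : (0:ℝ) < (m:ℝ) * ((m:ℝ)+1) := by positivity
    rw [div_le_iff₀ hden1]
    have heq : (1:ℝ)/2 * (1 / ((m:ℝ) * ((m:ℝ)+1))) = 1 / (2 * ((m:ℝ) * ((m:ℝ)+1))) := by
      field_simp
    rw [heq, div_mul_eq_mul_div, le_div_iff₀ (by positivity)]
    nlinarith
  have step2 : ∑ m ∈ F.image (fun p => p / 2), gfun m = ∑ p ∈ F, gfun (p / 2) := by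
    apply Finset.sum_image
    intro x hx y hy hxy
    have hx1 := hodd x hx; have hy1 := hodd y hy
    simp only at hxy
    omega
  have hsub : F.image (fun p => p / 2) ⊆ Finset.Icc 2 ((F.image (fun p => p / 2)).sup id) := by
    intro m hm
    simp only [Finset.mem_Icc]
    refine ⟨?_, Finset.le_sup (f := id) hm⟩
    rcases Finset.mem_image.mp hm with ⟨p, hp, rfl⟩
    have := h5 p hp; omega
  have tele_gfun : ∀ n : ℕ, ∑ m ∈ Finset.Icc 2 n, gfun m ≤ 1/4 := by
    intro n
    have h := tele_aux' n
    have heq : ∑ m ∈ Finset.Icc 2 n, gfun m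
        = 1/2 * ∑ m ∈ Finset.Icc 2 n, (1:ℝ) / ((m:ℝ) * ((m:ℝ) + 1)) := by
      rw [Finset.mul_sum]
      exact Finset.sum_congr rfl (fun m _ => by rw [gfun])
    rw [heq]
    linarith
  have step3 : ∑ m ∈ F.image (fun p => p / 2), gfun m ≤ 1/4 := by
    have h1 : ∑ m ∈ F.image (fun p => p / 2), gfun m
        ≤ ∑ m ∈ Finset.Icc 2 ((F.image (fun p => p / 2)).sup id), gfun m := by
      apply Finset.sum_le_sum_of_subset_of_nonneg hsub
      intro i _ _
      rw [gfun]
      positivity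
    exact le_trans h1 (tele_gfun _)
  linarith

/-- For every even integer `N ≥ 2` the singular series satisfies `S(N) > 1`. -/
theorem singularSeries_gt_one (N : ℕ) (hN : 2 ≤ N) (heven : 2 ∣ N) :
    singularSeries N > 1 := by
  unfold singularSeries
  -- first product ≥ 1
  have hP : 1 ≤ ∏ p ∈ (Finset.range N).filter (fun p => p.Prime ∧ ¬ p ∣ N),
      (1 + 1 / (p : ℝ) ^ 2) := by
    have : (∏ p ∈ (Finset.range N).filter (fun p => p.Prime ∧ ¬ p ∣ N), (1:ℝ))
        ≤ ∏ p ∈ (Finset.range N).filter (fun p => p.Prime ∧ ¬ p ∣ N), (1 + 1 / (p : ℝ) ^ 2) :=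
      Finset.prod_le_prod (fun i _ => zero_le_one)
        (fun i _ => by
          have : (0:ℝ) ≤ 1 / (i : ℝ)^2 := by positivity
          linarith)
    simpa using this
  have hN0 : N ≠ 0 := by omega
  have h2mem : 2 ∈ N.primeFactors :=
    Nat.mem_primeFactors.mpr ⟨Nat.prime_two, heven, hN0⟩
  set Q := ∏ p ∈ N.primeFactors, (1 - 2 / ((p : ℝ) ^ 2 + 1)) with hQ
  -- split off p = 2
  have hsplit : Q = (3/5) * ∏ p ∈ N.primeFactors.erase 2, (1 - 2 / ((p : ℝ) ^ 2 + 1)) := by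
    rw [hQ, ← Finset.mul_prod_erase _ _ h2mem]
    norm_num
  set F := N.primeFactors.erase 2 with hF
  have hFodd : ∀ p ∈ F, p % 2 = 1 := by
    intro p hp
    have hne : p ≠ 2 := Finset.ne_of_mem_erase hp
    have hprime : p.Prime := Nat.prime_of_mem_primeFactors (Finset.mem_of_mem_erase hp)
    exact Nat.odd_iff.mp (hprime.odd_of_ne_two hne)
  have hF5 : ∀ p ∈ F.erase 3, 5 ≤ p := by
    intro p hp
    have h3 : p ≠ 3 := Finset.ne_of_mem_erase hp
    have hpF : p ∈ F := Finset.mem_of_mem_erase hp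
    have hodd : p % 2 = 1 := hFodd p hpF
    have hprime : p.Prime := Nat.prime_of_mem_primeFactors (Finset.mem_of_mem_erase hpF)
    have h2 : 2 ≤ p := hprime.two_le
    omega
  have hFodd5 : ∀ p ∈ F.erase 3, p % 2 = 1 := fun p hp => hFodd p (Finset.mem_of_mem_erase hp)
  set R := ∏ p ∈ F.erase 3, (1 - 2 / ((p : ℝ) ^ 2 + 1)) with hR
  have hRge : (3:ℝ)/4 ≤ R := by
    have hw := weier_aux (F.erase 3) (fun p => 2 / ((p : ℝ) ^ 2 + 1))
      (fun p _ => by positivity)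
      (fun p hp => by
        have h5 : (5:ℝ) ≤ (p:ℝ) := by exact_mod_cast hF5 p hp
        rw [div_le_one (by positivity)]
        nlinarith)
    have hs := sum_odd_aux (F.erase 3) hFodd5 hF5
    calc (3:ℝ)/4 = 1 - 1/4 := by norm_num
      _ ≤ 1 - ∑ p ∈ F.erase 3, 2 / ((p : ℝ) ^ 2 + 1) := by linarith
      _ ≤ R := hw
  have hQge : (9:ℝ)/25 ≤ Q := by
    rw [hsplit]
    by_cases h3 : 3 ∈ F
    · rw [← Finset.mul_prod_erase _ _ h3, ← hR]
      have : (1 - 2 / (((3:ℕ) : ℝ) ^ 2 + 1)) = 4/5 := by norm_num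
      rw [this]
      nlinarith
    · have : F.erase 3 = F := Finset.erase_eq_of_notMem h3
      rw [← this, ← hR]
      nlinarith
  have hQpos : (0:ℝ) < Q := by linarith
  have h3 : Q ≤ (∏ p ∈ (Finset.range N).filter (fun p => p.Prime ∧ ¬ p ∣ N),
      (1 + 1 / (p : ℝ) ^ 2)) * Q := le_mul_of_one_le_left hQpos.le hP
  have hassoc : 3 * (∏ p ∈ (Finset.range N).filter (fun p => p.Prime ∧ ¬ p ∣ N),
      (1 + 1 / (p : ℝ) ^ 2)) * Q = 3 * ((∏ p ∈ (Finset.range N).filter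
      (fun p => p.Prime ∧ ¬ p ∣ N), (1 + 1 / (p : ℝ) ^ 2)) * Q) := by ring
  rw [gt_iff_lt, hassoc]
  linarith
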